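/- Let c > 1 with c not an integer, and let τ > 0 satisfy τ ≤ X^{1−c} for a large real number X. Then the number U of integer quadruples (n₁, n₂, n₃, n₄) with X < n₁, n₂, n₃, n₄ ≤ 2X and |n₁^c + n₂^c − n₃^c − n₄^c| ≤ 1/τ satisfies U ≪ X³ + τ^{−1} X^{4−c}, where the implied constant depends only on c. -/

import Mathlib

open Finset

/-- Mean-value / Bernoulli lower bound: for `1 < c`, `0 < x ≤ a ≤ b`,
`c * x^(c-1) * (b - a) ≤ b^c - a^c`. -/
theorem rpow_sub_rpow_ge_aux (c : ℝ) (hc1 : 1 < c) {x a b : ℝ} (hx : 0 < x)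
    (hxa : x ≤ a) (hab : a ≤ b) :
    c * x ^ (c - 1) * (b - a) ≤ b ^ c - a ^ c := by
  have ha : 0 < a := lt_of_lt_of_le hx hxa
  have hb : 0 < b := lt_of_lt_of_le ha hab
  have hs : (0:ℝ) ≤ b / a - 1 := by
    rw [sub_nonneg, le_div_iff₀ ha]; linarith
  have hB := one_add_mul_self_le_rpow_one_add (by linarith : (-1:ℝ) ≤ b / a - 1) hc1.le
  have h1a : (1 : ℝ) + (b / a - 1) = b / a := by ring
  rw [h1a] at hB
  have hpow : (b / a) ^ c = b ^ c / a ^ c := Real.div_rpow hb.le ha.le c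
  rw [hpow] at hB
  have hac : (0:ℝ) < a ^ c := Real.rpow_pos_of_pos ha _
  have hmul : a ^ c * (1 + c * (b / a - 1)) ≤ a ^ c * (b ^ c / a ^ c) :=
    mul_le_mul_of_nonneg_left hB hac.le
  have heq2 : a ^ c * (b ^ c / a ^ c) = b ^ c := by field_simp
  have hsub1 : a ^ (c - 1) = a ^ c / a := by
    rw [Real.rpow_sub ha, Real.rpow_one]
  have heq1 : a ^ c * (1 + c * (b / a - 1)) = a ^ c + c * (a ^ c / a) * (b - a) := by
    field_simp
  rw [heq1, heq2, ← hsub1] at hmul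
  -- hmul : a ^ c + c * a^(c-1) * (b - a) ≤ b ^ c
  have hx1 : x ^ (c - 1) ≤ a ^ (c - 1) :=
    Real.rpow_le_rpow hx.le hxa (by linarith)
  have hc0 : (0:ℝ) < c := by linarith
  nlinarith [mul_le_mul_of_nonneg_right hx1 (by linarith : (0:ℝ) ≤ b - a)]

/-- Counting quadruples with `|n₁^c + n₂^c − n₃^c − n₄^c| ≤ 1/τ`. -/
theorem stmt_6 (c : ℝ) (hc1 : 1 < c) (hc : ∀ k : ℤ, c ≠ k) :
    ∃ C X₀ : ℝ, 0 < C ∧ ∀ X τ : ℝ, X₀ ≤ X → 0 < τ → τ ≤ X ^ (1 - c) →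
      (((((Finset.Ioc ⌊X⌋₊ ⌊2 * X⌋₊) ×ˢ (Finset.Ioc ⌊X⌋₊ ⌊2 * X⌋₊)) ×ˢ
          ((Finset.Ioc ⌊X⌋₊ ⌊2 * X⌋₊) ×ˢ (Finset.Ioc ⌊X⌋₊ ⌊2 * X⌋₊))).filter
        (fun q => |(q.1.1 : ℝ) ^ c + (q.1.2 : ℝ) ^ c - (q.2.1 : ℝ) ^ c - (q.2.2 : ℝ) ^ c| ≤
          1 / τ)).card : ℝ) ≤ C * (X ^ 3 + τ⁻¹ * X ^ (4 - c)) := by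
  have hc0 : (0:ℝ) < c := by linarith
  refine ⟨8 + 16 / c, 1, by positivity, ?_⟩
  intro X τ hX hτ _
  have hX0 : (0:ℝ) < X := lt_of_lt_of_le one_pos hX
  have hXc : (0:ℝ) < X ^ (c - 1) := Real.rpow_pos_of_pos hX0 _
  set P := Finset.Ioc ⌊X⌋₊ ⌊2 * X⌋₊ with hP
  set S := ((P ×ˢ P) ×ˢ (P ×ˢ P)).filter
      (fun q => |(q.1.1 : ℝ) ^ c + (q.1.2 : ℝ) ^ c - (q.2.1 : ℝ) ^ c - (q.2.2 : ℝ) ^ c| ≤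
        1 / τ) with hS
  set L : ℝ := 2 / (τ * c * X ^ (c - 1)) with hLdef
  have hL0 : (0:ℝ) ≤ L := by positivity
  set n : ℕ := ⌊L⌋₊ + 1 with hn
  have hmemX : ∀ m : ℕ, m ∈ P → X < (m : ℝ) ∧ (m : ℝ) ≤ 2 * X := by
    intro m hm
    rw [hP, Finset.mem_Ioc] at hm
    constructor
    · have h2 : ((⌊X⌋₊ : ℝ) + 1) ≤ m := by exact_mod_cast Nat.succ_le_of_lt hm.1
      have := Nat.lt_floor_add_one X
      linarith
    · calc (m : ℝ) ≤ (⌊2 * X⌋₊ : ℝ) := Nat.cast_le.2 hm.2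
        _ ≤ 2 * X := Nat.floor_le (by linarith)
  -- fiber bound
  have key : ∀ a ∈ S.image (fun q => (q.1.1, q.1.2, q.2.1)),
      (S.filter (fun q => (q.1.1, q.1.2, q.2.1) = a)).card ≤ n := by
    rintro ⟨a1, a2, a3⟩ _
    set F := S.filter (fun q => (q.1.1, q.1.2, q.2.1) = (a1, a2, a3)) with hF
    set T := F.image (fun q => q.2.2) with hT
    have hinj : Set.InjOn (fun q : (ℕ × ℕ) × ℕ × ℕ => q.2.2) F := by
      rintro ⟨⟨x1, x2⟩, x3, x4⟩ hq ⟨⟨y1, y2⟩, y3, y4⟩ hq' h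
      simp only [hF, Finset.coe_filter, Set.mem_setOf_eq, Prod.mk.injEq] at hq hq'
      simp only at h
      obtain ⟨-, e1, e2, e3⟩ := hq
      obtain ⟨-, f1, f2, f3⟩ := hq'
      subst e1; subst e2; subst e3; subst h
      simp_all
    have hcard : F.card = T.card := (Finset.card_image_of_injOn hinj).symm
    rw [hcard]
    have hmemT : ∀ m ∈ T, X < (m : ℝ) ∧
        |(a1 : ℝ) ^ c + (a2 : ℝ) ^ c - (a3 : ℝ) ^ c - (m : ℝ) ^ c| ≤ 1 / τ := by
      intro m hm
      rw [hT, Finset.mem_image] at hm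
      obtain ⟨q, hq, rfl⟩ := hm
      rw [hF, Finset.mem_filter] at hq
      obtain ⟨hqS, hqa⟩ := hq
      rw [hS, Finset.mem_filter] at hqS
      obtain ⟨hqP, hqb⟩ := hqS
      simp only [Finset.mem_product] at hqP
      obtain ⟨e1, e2, e3⟩ : q.1.1 = a1 ∧ q.1.2 = a2 ∧ q.2.1 = a3 := by
        simpa [Prod.ext_iff] using hqa
      rw [e1, e2, e3] at hqb
      exact ⟨(hmemX _ hqP.2.2).1, hqb⟩
    rcases T.eq_empty_or_nonempty with hTe | hne
    · simp [hTe]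
    · set m₀ := T.min' hne with hm₀
      have h₀ := hmemT m₀ (T.min'_mem hne)
      have hbound : ∀ m ∈ T, m ≤ m₀ + ⌊L⌋₊ := by
        intro m hm
        have hmT := hmemT m hm
        have hle : m₀ ≤ m := T.min'_le m hm
        have hle' : (m₀ : ℝ) ≤ m := Nat.cast_le.2 hle
        have hdiff : (m : ℝ) ^ c - (m₀ : ℝ) ^ c ≤ 2 / τ := by
          have h1 := abs_le.1 h₀.2
          have h2 := abs_le.1 hmT.2
          have : 1 / τ + 1 / τ = 2 / τ := by ring
          linarith
        have hber := rpow_sub_rpow_ge_aux c hc1 hX0 h₀.1.le hle'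
        have hr : ((m : ℝ) - m₀) ≤ L := by
          rw [hLdef, le_div_iff₀ (by positivity)]
          have hτ' : c * X ^ (c - 1) * ((m : ℝ) - m₀) ≤ 2 / τ := le_trans hber hdiff
          have := mul_le_mul_of_nonneg_left hτ' hτ.le
          calc ((m : ℝ) - m₀) * (τ * c * X ^ (c - 1))
              = τ * (c * X ^ (c - 1) * ((m : ℝ) - m₀)) := by ring
            _ ≤ τ * (2 / τ) := this
            _ = 2 := by field_simp
        have h2 : ((m - m₀ : ℕ) : ℝ) ≤ L := by rw [Nat.cast_sub hle]; exact hr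
        have := Nat.le_floor h2
        omega
      have hsub : T ⊆ Finset.Icc m₀ (m₀ + ⌊L⌋₊) := fun m hm =>
        Finset.mem_Icc.2 ⟨T.min'_le m hm, hbound m hm⟩
      have := Finset.card_le_card hsub
      rw [Nat.card_Icc] at this
      omega
  have h1 : S.card ≤ n * (S.image (fun q => (q.1.1, q.1.2, q.2.1))).card :=
    Finset.card_le_mul_card_image S n key
  have h2 : (S.image (fun q => (q.1.1, q.1.2, q.2.1))) ⊆ P ×ˢ (P ×ˢ P) := by
    intro a ha
    rw [Finset.mem_image] at ha
    obtain ⟨q, hq, rfl⟩ := ha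
    rw [hS, Finset.mem_filter] at hq
    simp only [Finset.mem_product] at hq ⊢
    exact ⟨hq.1.1.1, hq.1.1.2, hq.1.2.1⟩
  have h3 : (S.image (fun q => (q.1.1, q.1.2, q.2.1))).card ≤ P.card ^ 3 := by
    calc (S.image (fun q => (q.1.1, q.1.2, q.2.1))).card
        ≤ (P ×ˢ (P ×ˢ P)).card := Finset.card_le_card h2
      _ = P.card ^ 3 := by rw [Finset.card_product, Finset.card_product]; ring
  have hPcard : (P.card : ℝ) ≤ 2 * X := by
    rw [hP, Nat.card_Ioc]
    calc ((⌊2 * X⌋₊ - ⌊X⌋₊ : ℕ) : ℝ) ≤ (⌊2 * X⌋₊ : ℝ) := Nat.cast_le.2 (Nat.sub_le _ _)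
      _ ≤ 2 * X := Nat.floor_le (by linarith)
  have hnL : (n : ℝ) ≤ 1 + L := by
    have := Nat.floor_le hL0
    rw [hn]
    push_cast
    linarith
  have hLeq : L = 2 / c * τ⁻¹ * X ^ (1 - c) := by
    rw [hLdef, show (1 - c) = -(c - 1) by ring, Real.rpow_neg hX0.le,
      div_eq_mul_inv, mul_inv, mul_inv]
    ring
  have hsplit : X ^ (4 - c) = X ^ (1 - c) * X ^ 3 := by
    rw [show (4 - c) = (1 - c) + 3 by ring, Real.rpow_add hX0,
      show ((3:ℝ)) = ((3:ℕ) : ℝ) by norm_num, Real.rpow_natCast]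
  have hcast : (S.card : ℝ) ≤ (n : ℝ) * ((P.card : ℝ)) ^ 3 := by
    have := h1.trans (Nat.mul_le_mul_left n h3)
    exact_mod_cast this
  calc (S.card : ℝ) ≤ (n : ℝ) * ((P.card : ℝ)) ^ 3 := hcast
    _ ≤ (1 + L) * (2 * X) ^ 3 := by
        apply mul_le_mul hnL (pow_le_pow_left₀ (Nat.cast_nonneg _) hPcard 3)
          (by positivity) (by linarith)
    _ = 8 * X ^ 3 + 16 / c * (τ⁻¹ * X ^ (4 - c)) := by
        rw [hLeq, hsplit]; ring
    _ ≤ (8 + 16 / c) * (X ^ 3 + τ⁻¹ * X ^ (4 - c)) := by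
        have hA : (0:ℝ) ≤ X ^ 3 := by positivity
        have hB : (0:ℝ) ≤ τ⁻¹ * X ^ (4 - c) := by positivity
        have h16 : (0:ℝ) ≤ 16 / c := by positivity
        nlinarith
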